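/- Suppose n ≥ 20 is an integer and d > 0 satisfies 108·π² ≥ (8·π²·(2/3)^n·2^{n−1−(n−1)}·d^{3/2})/((8·π²)^n·256). Then d^{1/n} ≤ 24.117·229^{1/n}. -/
import Mathlib


open Real in
/-- If `n ≥ 20` and `d > 0` satisfy
`108·π² ≥ 8·π²·(2/3)^n·2^{n−1−(n−1)}·d^{3/2}/((8·π²)^n·256)`, then
`d^{1/n} ≤ 24.117·229^{1/n}`. -/
theorem stmt_3 (n : ℕ) (hn : 20 ≤ n) (d : ℝ) (hd : 0 < d)
    (hineq : 8 * π ^ 2 * (2 / 3 : ℝ) ^ n * (2 : ℝ) ^ (n - 1 - (n - 1)) * d ^ ((3 : ℝ) / 2) /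
        ((8 * π ^ 2) ^ n * 256) ≤ 108 * π ^ 2) :
    d ^ ((1 : ℝ) / n) ≤ 24.117 * (229 : ℝ) ^ ((1 : ℝ) / n) := by
  have hpi : (3.1415 : ℝ) < π := by linarith [Real.pi_gt_d6]
  have hpi' : π < 3.141593 := Real.pi_lt_d6
  have hpi0 : (0:ℝ) < π := by linarith
  -- simplify the nat subtraction exponent
  rw [Nat.sub_self, pow_zero] at hineq
  set M : ℝ := 229 * 24.117 ^ n with hM
  have hM0 : (0:ℝ) < M := by positivity
  -- key: 12π² ≤ 24.117^{3/2}
  have h32 : (12 * π ^ 2 : ℝ) ≤ (24.117 : ℝ) ^ ((3:ℝ)/2) := by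
    have h1 : (24.117 : ℝ) ^ ((3:ℝ)/2) = ((24.117:ℝ) ^ (3:ℕ)) ^ ((1:ℝ)/2) := by
      rw [← Real.rpow_natCast (24.117:ℝ) 3, ← Real.rpow_mul (by norm_num)]
      norm_num
    have h2 : (12 * π ^ 2 : ℝ) = ((12 * π ^ 2)^(2:ℕ)) ^ ((1:ℝ)/2) := by
      rw [← Real.rpow_natCast (12 * π ^ 2 : ℝ) 2, ← Real.rpow_mul (by positivity)]
      norm_num
    rw [h1, h2]
    apply Real.rpow_le_rpow (by positivity) _ (by norm_num)
    have hpi2 : π ^ 2 < 9.8696067 := by nlinarith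
    nlinarith [sq_nonneg π, hpi2]
  have h229 : (3456 : ℝ) ≤ (229 : ℝ) ^ ((3:ℝ)/2) := by
    have h1 : (229 : ℝ) ^ ((3:ℝ)/2) = ((229:ℝ) ^ (3:ℕ)) ^ ((1:ℝ)/2) := by
      rw [← Real.rpow_natCast (229:ℝ) 3, ← Real.rpow_mul (by norm_num)]
      norm_num
    have h2 : (3456 : ℝ) = ((3456:ℝ)^(2:ℕ)) ^ ((1:ℝ)/2) := by
      rw [← Real.rpow_natCast (3456:ℝ) 2, ← Real.rpow_mul (by norm_num)]
      norm_num
    rw [h1, h2]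
    apply Real.rpow_le_rpow (by norm_num) (by norm_num) (by norm_num)
  -- M^{3/2} = 229^{3/2} * (24.117^{3/2})^n
  have hMsplit : M ^ ((3:ℝ)/2) = (229:ℝ) ^ ((3:ℝ)/2) * ((24.117:ℝ) ^ ((3:ℝ)/2)) ^ n := by
    rw [hM, Real.mul_rpow (by norm_num) (by positivity),
      ← Real.rpow_natCast (24.117:ℝ) n, ← Real.rpow_mul (by norm_num),
      ← Real.rpow_natCast ((24.117:ℝ) ^ ((3:ℝ)/2)) n, ← Real.rpow_mul (by norm_num)]
    ring_nf
  -- show d ≤ M via d^{3/2} ≤ M^{3/2}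
  have hdM : d ≤ M := by
    rw [← Real.rpow_le_rpow_iff hd.le hM0.le (show (0:ℝ) < (3:ℝ)/2 by norm_num)]
    -- from hineq : d^{3/2} ≤ 108π²·(8π²)^n·256·(3/2)^n/(8π²)
    have hden : (0:ℝ) < (8 * π ^ 2) ^ n * 256 := by positivity
    rw [div_le_iff₀ hden] at hineq
    have h23 : (0:ℝ) < (2/3:ℝ)^n := by positivity
    have key : 108 * π ^ 2 * ((8 * π ^ 2) ^ n * 256) ≤
        8 * π ^ 2 * (2 / 3 : ℝ) ^ n * (1 : ℝ) * M ^ ((3:ℝ)/2) := by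
      rw [hMsplit]
      have hb : ((2/3 : ℝ) * (24.117:ℝ) ^ ((3:ℝ)/2)) ^ n ≥ (8 * π ^ 2) ^ n := by
        apply pow_le_pow_left₀ (by positivity)
        nlinarith [h32]
      calc 108 * π ^ 2 * ((8 * π ^ 2) ^ n * 256)
          = (8 * π ^ 2) * (3456 * (8 * π ^ 2) ^ n) := by ring
        _ ≤ (8 * π ^ 2) * ((229:ℝ) ^ ((3:ℝ)/2) * ((2/3:ℝ) * (24.117:ℝ) ^ ((3:ℝ)/2)) ^ n) := by
            apply mul_le_mul_of_nonneg_left _ (by positivity)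
            exact mul_le_mul h229 hb (by positivity) (by positivity)
        _ = 8 * π ^ 2 * (2 / 3 : ℝ) ^ n * (1 : ℝ) *
            ((229:ℝ) ^ ((3:ℝ)/2) * ((24.117:ℝ) ^ ((3:ℝ)/2)) ^ n) := by
            rw [mul_pow]; ring
    have hpos : (0:ℝ) < 8 * π ^ 2 * (2 / 3 : ℝ) ^ n * (1 : ℝ) := by positivity
    have := le_trans hineq (by nlinarith [key] : 108 * π ^ 2 * ((8 * π ^ 2) ^ n * 256) ≤
        8 * π ^ 2 * (2 / 3 : ℝ) ^ n * (1 : ℝ) * M ^ ((3:ℝ)/2))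
    exact le_of_mul_le_mul_left (by linarith [this]) hpos
  -- conclude
  have hn0 : (0:ℝ) < (n:ℝ) := by positivity
  calc d ^ ((1:ℝ)/n) ≤ M ^ ((1:ℝ)/n) :=
        Real.rpow_le_rpow hd.le hdM (by positivity)
    _ = 24.117 * (229:ℝ) ^ ((1:ℝ)/n) := by
        rw [hM, Real.mul_rpow (by norm_num) (by positivity),
          ← Real.rpow_natCast (24.117:ℝ) n, ← Real.rpow_mul (by norm_num)]
        rw [mul_one_div, div_self hn0.ne', Real.rpow_one]
        ring
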